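/- Fix λ > 0 and define the population EgReg estimator β̂(ω) = Γ (Γ' X' X Γ + nλ I_u)^{-1} Γ' X' Y(ω) and its mean β̄ = Γ (Γ' X' X Γ + nλ I_u)^{-1} Γ' X' X β*. Then the variance component satisfies 𝔼[ tr( (β̂ − β̄)' Σ_x (β̂ − β̄) ) ] = (1/n) · tr(Σ_ε) · tr( (S + λ I_u)^{-2} S ). -/

import Mathlib

open Matrix MeasureTheory

theorem population_egreg_variance
    (n p u q : ℕ) (hn : 0 < n) (hp : 0 < p) (hu : 0 < u) (hq : 0 < q)
    (Γ : Matrix (Fin p) (Fin u) ℝ) (hΓ : Γᵀ * Γ = 1)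
    (Sx : Matrix (Fin p) (Fin p) ℝ) (hSx : Sx.IsSymm) (hSxΓ : Sx * Γ = Γ)
    (β : Matrix (Fin p) (Fin q) ℝ) (hβ : β = Γ * Γᵀ * β)
    (X : Matrix (Fin n) (Fin p) ℝ)
    (S : Matrix (Fin u) (Fin u) ℝ) (hS : S = ((n : ℝ)⁻¹) • (Γᵀ * Xᵀ * X * Γ))
    (Se : Matrix (Fin q) (Fin q) ℝ) (hSe : Se.PosSemidef)
    (lam : ℝ) (hlam : 0 < lam)
    -- probability space and mean-zero noise with Var(vec E) = Σ_ε ⊗ I_n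
    {Ω : Type*} [MeasurableSpace Ω] (P : Measure Ω) [IsProbabilityMeasure P]
    (E : Ω → Matrix (Fin n) (Fin q) ℝ)
    (hL2 : ∀ i k, MemLp (fun ω => E ω i k) 2 P)
    (hmean : ∀ i k, ∫ ω, E ω i k ∂P = 0)
    (hcov : ∀ i j k l, ∫ ω, E ω i k * E ω j l ∂P = (if i = j then (1:ℝ) else 0) * Se k l)
    (Y : Ω → Matrix (Fin n) (Fin q) ℝ) (hY : ∀ ω, Y ω = X * β + E ω)
    -- the population EgReg estimator and its mean
    (βhat : Ω → Matrix (Fin p) (Fin q) ℝ)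
    (hβhat : ∀ ω, βhat ω = Γ * (Γᵀ * Xᵀ * X * Γ + ((n : ℝ) * lam) • 1)⁻¹ * Γᵀ * Xᵀ * Y ω)
    (βbar : Matrix (Fin p) (Fin q) ℝ)
    (hβbar : βbar = Γ * (Γᵀ * Xᵀ * X * Γ + ((n : ℝ) * lam) • 1)⁻¹ * Γᵀ * Xᵀ * X * β) :
    ∫ ω, ((βhat ω - βbar)ᵀ * Sx * (βhat ω - βbar)).trace ∂P =
      ((n : ℝ)⁻¹) * Se.trace * (((S + lam • 1) ^ 2)⁻¹ * S).trace := by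
  have hn' : (n : ℝ) ≠ 0 := Nat.cast_ne_zero.mpr hn.ne'
  set N : Matrix (Fin u) (Fin u) ℝ := Γᵀ * Xᵀ * X * Γ with hNdef
  set W : Matrix (Fin u) (Fin u) ℝ := N + ((n : ℝ) * lam) • 1 with hWdef
  set M : Matrix (Fin u) (Fin u) ℝ := W⁻¹ with hMdef
  have hNfac : N = (X * Γ)ᵀ * (X * Γ) := by
    rw [hNdef, Matrix.transpose_mul, Matrix.mul_assoc, Matrix.mul_assoc]
  have hNpsd : N.PosSemidef := by
    rw [hNfac, ← Matrix.conjTranspose_eq_transpose_of_trivial]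
    exact Matrix.posSemidef_conjTranspose_mul_self _
  have hNsymm : Nᵀ = N := by rw [hNfac]; simp [Matrix.transpose_mul]
  have hWpos : W.PosDef := by
    rw [hWdef]
    refine Matrix.PosDef.posSemidef_add hNpsd ?_
    rw [Matrix.smul_one_eq_diagonal]
    exact Matrix.posDef_diagonal_iff.mpr fun i => by positivity
  have hWdet : IsUnit W.det := hWpos.det_pos.ne'.isUnit
  have hWM : W * M = 1 := Matrix.mul_nonsing_inv _ hWdet
  have hMW : M * W = 1 := Matrix.nonsing_inv_mul _ hWdet
  have hMsymm : Mᵀ = M := by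
    rw [hMdef, Matrix.transpose_nonsing_inv]
    congr 1
    rw [hWdef, Matrix.transpose_add, hNsymm, Matrix.transpose_smul, Matrix.transpose_one]
  -- the difference
  have hdiff : ∀ ω, βhat ω - βbar = Γ * M * Γᵀ * Xᵀ * E ω := by
    intro ω
    rw [hβhat, hβbar, hY, Matrix.mul_add]
    rw [show Γ * M * Γᵀ * Xᵀ * (X * β) = Γ * M * Γᵀ * Xᵀ * X * β from
      (Matrix.mul_assoc _ _ _).symm]
    exact add_sub_cancel_left _ _
  set A : Matrix (Fin n) (Fin n) ℝ := X * Γ * (M * M) * Γᵀ * Xᵀ with hAdef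
  have h1 : ∀ Z : Matrix (Fin u) (Fin q) ℝ, Γᵀ * (Sx * (Γ * Z)) = Z := by
    intro Z
    rw [← Matrix.mul_assoc Sx Γ Z, hSxΓ, ← Matrix.mul_assoc, hΓ, Matrix.one_mul]
  have hptwise : ∀ ω, ((βhat ω - βbar)ᵀ * Sx * (βhat ω - βbar)).trace
      = ((E ω)ᵀ * A * E ω).trace := by
    intro ω
    rw [hdiff ω]
    congr 1
    rw [hAdef]
    simp only [Matrix.transpose_mul, Matrix.transpose_transpose, hMsymm, Matrix.mul_assoc]
    rw [h1]
  -- trace as triple sum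
  have htr : ∀ ω, ((E ω)ᵀ * A * E ω).trace
      = ∑ k : Fin q, ∑ j : Fin n, ∑ i : Fin n, A i j * (E ω i k * E ω j k) := by
    intro ω
    simp only [Matrix.trace, Matrix.diag, Matrix.mul_apply, Matrix.transpose_apply,
      Finset.sum_mul]
    refine Finset.sum_congr rfl fun k _ => Finset.sum_congr rfl fun j _ =>
      Finset.sum_congr rfl fun i _ => by ring
  -- integrability
  have hInt : ∀ (i j : Fin n) (k l : Fin q),
      Integrable (fun ω => E ω i k * E ω j l) P := by
    intro i j k l
    have harith : (1 : ENNReal) / 1 = 1 / 2 + 1 / 2 := by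
      rw [ENNReal.div_add_div_same, one_div_one, one_add_one_eq_two]
      exact (ENNReal.div_self two_ne_zero ENNReal.ofNat_ne_top).symm
    have h : MemLp ((fun ω => E ω i k) • fun ω => E ω j l) 1 P :=
      (hL2 j l).smul (hL2 i k) (hpqr := ⟨by simpa [one_div] using harith.symm⟩)
    rw [memLp_one_iff_integrable] at h
    simpa [Pi.smul_apply, smul_eq_mul, Pi.mul_def] using h
  have hI1 : ∀ (i j : Fin n) (k : Fin q),
      Integrable (fun ω => A i j * (E ω i k * E ω j k)) P :=
    fun i j k => (hInt i j k k).const_mul _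
  have hI2 : ∀ (j : Fin n) (k : Fin q),
      Integrable (fun ω => ∑ i, A i j * (E ω i k * E ω j k)) P :=
    fun j k => integrable_finset_sum _ fun i _ => hI1 i j k
  have hI3 : ∀ k : Fin q,
      Integrable (fun ω => ∑ j, ∑ i, A i j * (E ω i k * E ω j k)) P :=
    fun k => integrable_finset_sum _ fun j _ => hI2 j k
  -- compute the integral
  have hval : ∫ ω, ((βhat ω - βbar)ᵀ * Sx * (βhat ω - βbar)).trace ∂P
      = A.trace * Se.trace := by
    calc ∫ ω, ((βhat ω - βbar)ᵀ * Sx * (βhat ω - βbar)).trace ∂P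
        = ∫ ω, ∑ k : Fin q, ∑ j : Fin n, ∑ i : Fin n, A i j * (E ω i k * E ω j k) ∂P := by
          refine integral_congr_ae (Filter.Eventually.of_forall fun ω => ?_)
          dsimp only
          rw [hptwise ω, htr ω]
      _ = ∑ k : Fin q, ∑ j : Fin n, ∑ i : Fin n, A i j * ∫ ω, E ω i k * E ω j k ∂P := by
          rw [integral_finset_sum _ fun k _ => hI3 k]
          refine Finset.sum_congr rfl fun k _ => ?_
          rw [integral_finset_sum _ fun j _ => hI2 j k]
          refine Finset.sum_congr rfl fun j _ => ?_
          rw [integral_finset_sum _ fun i _ => hI1 i j k]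
          refine Finset.sum_congr rfl fun i _ => ?_
          exact integral_const_mul _ _
      _ = ∑ k : Fin q, ∑ j : Fin n, A j j * Se k k := by
          refine Finset.sum_congr rfl fun k _ => Finset.sum_congr rfl fun j _ => ?_
          have : ∀ i : Fin n, A i j * ∫ ω, E ω i k * E ω j k ∂P
              = if i = j then A j j * Se k k else 0 := by
            intro i
            rw [hcov]
            by_cases h : i = j <;> simp [h]
          rw [Finset.sum_congr rfl fun i _ => this i, Finset.sum_ite_eq' Finset.univ j]
          simp
      _ = A.trace * Se.trace := by
          rw [Matrix.trace, Matrix.trace, Finset.sum_mul_sum]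
          rw [Finset.sum_comm]
          simp [Matrix.diag]
  rw [hval]
  -- now the matrix algebra for the RHS
  have hTeq : S + lam • 1 = ((n : ℝ)⁻¹) • W := by
    rw [hS, hWdef, smul_add, smul_smul]
    congr 2
    field_simp
  have hWW : IsUnit (W * W).det := by rw [Matrix.det_mul]; exact hWdet.mul hWdet
  have hc : ((n : ℝ)⁻¹ * (n : ℝ)⁻¹) ≠ 0 := mul_ne_zero (inv_ne_zero hn') (inv_ne_zero hn')
  letI : Invertible ((n : ℝ)⁻¹ * (n : ℝ)⁻¹) := invertibleOfNonzero hc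
  have hT2 : (S + lam • 1) ^ 2 = ((n : ℝ)⁻¹ * (n : ℝ)⁻¹) • (W * W) := by
    rw [hTeq, sq, Matrix.smul_mul, Matrix.mul_smul, smul_smul]
  have hT2inv : ((S + lam • 1) ^ 2)⁻¹ = ((n : ℝ) * (n : ℝ)) • (M * M) := by
    rw [hT2, Matrix.inv_smul (A := W * W) ((n : ℝ)⁻¹ * (n : ℝ)⁻¹) hWW, Matrix.mul_inv_rev, ← hMdef,
      invOf_eq_inv _]
    congr 1
    field_simp
  have hrhs : (((S + lam • 1) ^ 2)⁻¹ * S).trace = (n : ℝ) * (M * M * N).trace := by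
    rw [hT2inv, hS, Matrix.smul_mul, Matrix.mul_smul, smul_smul,
      Matrix.trace_smul, smul_eq_mul, mul_inv_cancel_right₀ hn']
  have hAtr : A.trace = (M * M * N).trace := by
    rw [hAdef]
    rw [show X * Γ * (M * M) * Γᵀ * Xᵀ = (X * Γ * (M * M)) * (Γᵀ * Xᵀ) from
      Matrix.mul_assoc _ _ _]
    rw [Matrix.trace_mul_comm]
    rw [show Γᵀ * Xᵀ * (X * Γ * (M * M)) = N * (M * M) by
      rw [hNdef]; simp only [Matrix.mul_assoc]]
    rw [Matrix.trace_mul_comm]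
  rw [hrhs, hAtr]
  field_simp
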